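/- Let β > 0 and γ > 1/2, and let ψ(k) := cos(√β k)^γ on I = (−π/(2√β), π/(2√β)). Then ∫_I |ψ'(k)|² dk = (β γ²/(2γ−1)) · ∫_I ψ(k)² dk. Consequently, for the normalized state ψ_γ = κ(γ)^{−1/2} ψ with κ(γ) = ∫_I ψ², the position variance ∫_I |ψ_γ'(k)|² dk equals β γ²/(2γ−1). -/

import Mathlib

open MeasureTheory Set intervalIntegral

lemma pv_int_aux {s a p : ℝ} (hs : 0 < s) (hsa : s * a = Real.pi / 2) (hp : -1 < p) :
    IntegrableOn (fun k => Real.cos (s * k) ^ p) (Set.Ioo (-a) a) := by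
  have hπ : 0 < Real.pi := Real.pi_pos
  have ha : 0 < a := by nlinarith
  rcases le_or_gt 0 p with hp0 | hp0
  · -- continuous case
    have hc : Continuous (fun k => Real.cos (s * k) ^ p) :=
      (Real.continuous_rpow_const hp0).comp (Real.continuous_cos.comp (continuous_const.mul continuous_id))
    exact (hc.integrableOn_Icc (a := -a) (b := a)).mono_set Set.Ioo_subset_Icc_self
  · -- negative exponent: split
    have hcov : Set.Ioo (-a) a = Set.Ioo (-a) 0 ∪ Set.Ico 0 a :=
      (Set.Ioo_union_Ico_eq_Ioo (by linarith) ha.le).symm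
    rw [hcov]
    have hcpos₁ : ∀ k ∈ Set.Ioo (-a) 0, 0 < Real.cos (s * k) := by
      intro k hk
      apply Real.cos_pos_of_mem_Ioo
      constructor
      · rw [← hsa]; nlinarith [hk.1, hk.2]
      · nlinarith [hk.1, hk.2, hsa]
    have hcpos₂ : ∀ k ∈ Set.Ico 0 a, 0 < Real.cos (s * k) := by
      intro k hk
      apply Real.cos_pos_of_mem_Ioo
      constructor
      · rw [← hsa]; nlinarith [hk.1, hk.2]
      · nlinarith [hk.1, hk.2, hsa]
    apply IntegrableOn.union
    · -- on Ioo (-a) 0 : majorant ((2/π)*s)^p * (k+a)^p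
      have hmaj : IntegrableOn (fun k => ((2 / Real.pi) * s) ^ p * (k + a) ^ p) (Set.Ioo (-a) 0) := by
        have h1 : IntervalIntegrable (fun x : ℝ => x ^ p) volume 0 a :=
          intervalIntegral.intervalIntegrable_rpow' hp
        have h2 : IntervalIntegrable (fun k : ℝ => (k + a) ^ p) volume (0 - a) (a - a) :=
          h1.comp_add_right a
        simp only [zero_sub, sub_self] at h2
        have h3 := (h2.const_mul (((2 / Real.pi) * s) ^ p)).1
        exact h3.mono_set Set.Ioo_subset_Ioc_self
      apply hmaj.integrable.mono
      · exact (ContinuousOn.rpow_const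
          ((Real.continuous_cos.comp (continuous_const.mul continuous_id)).continuousOn)
          (fun k hk => Or.inl (hcpos₁ k hk).ne')).aestronglyMeasurable measurableSet_Ioo
      · rw [ae_restrict_iff' measurableSet_Ioo]
        filter_upwards with k hk
        have hcp := hcpos₁ k hk
        have hka : 0 < k + a := by linarith [hk.1]
        have hb : (2 / Real.pi) * s * (k + a) ≤ Real.cos (s * k) := by
          have : Real.cos (s * k) = Real.sin (s * (k + a)) := by
            rw [← Real.cos_neg, ← Real.sin_pi_div_two_sub]
            congr 1
            rw [← hsa]; ring
          rw [this]
          have := Real.mul_le_sin (x := s * (k + a)) (by positivity)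
            (by nlinarith [hk.2])
          calc (2 / Real.pi) * s * (k + a) = 2 / Real.pi * (s * (k + a)) := by ring
          _ ≤ Real.sin (s * (k + a)) := this
        have hfb : Real.cos (s * k) ^ p ≤ ((2 / Real.pi) * s * (k + a)) ^ p :=
          Real.rpow_le_rpow_of_nonpos (by positivity) hb hp0.le
        rw [Real.norm_of_nonneg (Real.rpow_nonneg hcp.le p),
          Real.norm_of_nonneg (by positivity)]
        rw [Real.mul_rpow (by positivity) hka.le] at hfb
        exact hfb
    · -- on Ico 0 a : majorant ((2/π)*s)^p * (a-k)^p
      have hmaj : IntegrableOn (fun k => ((2 / Real.pi) * s) ^ p * (a - k) ^ p) (Set.Ico 0 a) := by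
        have h1 : IntervalIntegrable (fun x : ℝ => x ^ p) volume 0 a :=
          intervalIntegral.intervalIntegrable_rpow' hp
        have h2 : IntervalIntegrable (fun k : ℝ => (a - k) ^ p) volume (a - 0) (a - a) :=
          h1.comp_sub_left a
        simp only [sub_self, sub_zero] at h2
        have h3 := ((h2.symm).const_mul (((2 / Real.pi) * s) ^ p)).1
        rw [integrableOn_Ico_iff_integrableOn_Ioo]
        exact h3.mono_set Set.Ioo_subset_Ioc_self
      apply hmaj.integrable.mono
      · exact (ContinuousOn.rpow_const
          ((Real.continuous_cos.comp (continuous_const.mul continuous_id)).continuousOn)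
          (fun k hk => Or.inl (hcpos₂ k hk).ne')).aestronglyMeasurable measurableSet_Ico
      · rw [ae_restrict_iff' measurableSet_Ico]
        filter_upwards with k hk
        have hcp := hcpos₂ k hk
        have hka : 0 < a - k := by linarith [hk.2]
        have hb : (2 / Real.pi) * s * (a - k) ≤ Real.cos (s * k) := by
          have : Real.cos (s * k) = Real.sin (s * (a - k)) := by
            rw [← Real.sin_pi_div_two_sub]
            congr 1
            rw [← hsa]; ring
          rw [this]
          have := Real.mul_le_sin (x := s * (a - k)) (by positivity)
            (by nlinarith [hk.1])
          calc (2 / Real.pi) * s * (a - k) = 2 / Real.pi * (s * (a - k)) := by ring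
          _ ≤ Real.sin (s * (a - k)) := this
        have hfb : Real.cos (s * k) ^ p ≤ ((2 / Real.pi) * s * (a - k)) ^ p :=
          Real.rpow_le_rpow_of_nonpos (by positivity) hb hp0.le
        rw [Real.norm_of_nonneg (Real.rpow_nonneg hcp.le p),
          Real.norm_of_nonneg (by positivity)]
        rw [Real.mul_rpow (by positivity) hka.le] at hfb
        exact hfb

/-- Position second moment (variance) of the optimal states: for
`ψ(k) = cos(√β k)^γ` with `γ > 1/2` on `I = (−π/(2√β), π/(2√β))`,
`∫_I ψ'² = (β γ²/(2γ−1)) ∫_I ψ²`; hence the normalized state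
`ψ_γ = κ(γ)^{−1/2} ψ` has `∫_I ψ_γ'² = β γ²/(2γ−1)`. -/
theorem position_variance_optimal_states
    (β γ : ℝ) (hβ : 0 < β) (hγ : 1 / 2 < γ)
    (I : Set ℝ)
    (hI : I = Set.Ioo (-(Real.pi / (2 * Real.sqrt β))) (Real.pi / (2 * Real.sqrt β)))
    (ψ : ℝ → ℝ)
    (hψ : ∀ k : ℝ, ψ k = Real.cos (Real.sqrt β * k) ^ γ)
    (κ : ℝ) (hκ : κ = ∫ k in I, ψ k ^ 2)
    (ψn : ℝ → ℝ)
    (hψn : ∀ k : ℝ, ψn k = κ ^ (-(1 / 2) : ℝ) * ψ k) :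
    (∫ k in I, (deriv ψ k) ^ 2)
        = (β * γ ^ 2 / (2 * γ - 1)) * ∫ k in I, ψ k ^ 2 ∧
    (∫ k in I, (deriv ψn k) ^ 2) = β * γ ^ 2 / (2 * γ - 1) := by
  have hπ : 0 < Real.pi := Real.pi_pos
  set s : ℝ := Real.sqrt β with hsdef
  have hs : 0 < s := Real.sqrt_pos.mpr hβ
  have hs2 : s ^ 2 = β := Real.sq_sqrt hβ.le
  set a : ℝ := Real.pi / (2 * s) with hadef
  have hsa : s * a = Real.pi / 2 := by
    field_simp [hadef]
    rw [hadef]; field_simp [hs.ne']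
  have ha : 0 < a := by positivity
  have hIa : I = Set.Ioo (-a) a := hI
  have h2γ : 0 < 2 * γ - 1 := by linarith
  have hcpos : ∀ k ∈ Set.Ioo (-a) a, 0 < Real.cos (s * k) := by
    intro k hk
    apply Real.cos_pos_of_mem_Ioo
    constructor
    · rw [← hsa]; nlinarith [hk.1, hk.2]
    · nlinarith [hk.1, hk.2, hsa]
  have hψfun : ψ = fun k => Real.cos (s * k) ^ γ := funext hψ
  have hDψ : ∀ k ∈ Set.Ioo (-a) a,
      HasDerivAt ψ (γ * Real.cos (s * k) ^ (γ - 1) * (-Real.sin (s * k) * s)) k := by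
    intro k hk
    have h0 : HasDerivAt (fun x : ℝ => s * x) s k := by
      simpa using (hasDerivAt_id k).const_mul s
    have h1 : HasDerivAt (fun x : ℝ => Real.cos (s * x)) (-Real.sin (s * k) * s) k :=
      (Real.hasDerivAt_cos (s * k)).comp k h0
    have h2 : HasDerivAt (fun y : ℝ => y ^ γ) (γ * Real.cos (s * k) ^ (γ - 1))
        (Real.cos (s * k)) := Real.hasDerivAt_rpow_const (Or.inl (hcpos k hk).ne')
    have := h2.comp k h1
    rw [hψfun]
    exact this
  have hintA : IntegrableOn (fun k => Real.cos (s * k) ^ (2 * γ)) (Set.Ioo (-a) a) :=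
    pv_int_aux hs hsa (by linarith)
  have hintC : IntegrableOn (fun k => Real.cos (s * k) ^ (2 * γ - 2)) (Set.Ioo (-a) a) :=
    pv_int_aux hs hsa (by linarith)
  set A : ℝ := ∫ k in Set.Ioo (-a) a, Real.cos (s * k) ^ (2 * γ) with hAdef
  set C : ℝ := ∫ k in Set.Ioo (-a) a, Real.cos (s * k) ^ (2 * γ - 2) with hCdef
  have hiiA : IntervalIntegrable (fun k => Real.cos (s * k) ^ (2 * γ)) volume (-a) a := by
    rw [intervalIntegrable_iff_integrableOn_Ioo_of_le (by linarith)]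
    exact hintA
  have hiiC : IntervalIntegrable (fun k => Real.cos (s * k) ^ (2 * γ - 2)) volume (-a) a := by
    rw [intervalIntegrable_iff_integrableOn_Ioo_of_le (by linarith)]
    exact hintC
  -- FTC identity
  have hkey : s * (2 * γ) * A = s * (2 * γ - 1) * C := by
    set G : ℝ → ℝ := fun k => Real.sin (s * k) * Real.cos (s * k) ^ (2 * γ - 1) with hGdef
    set G' : ℝ → ℝ := fun k => s * (2 * γ) * Real.cos (s * k) ^ (2 * γ)
        - s * (2 * γ - 1) * Real.cos (s * k) ^ (2 * γ - 2) with hG'def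
    have hGcont : ContinuousOn G (Set.Icc (-a) a) := by
      apply Continuous.continuousOn
      apply Continuous.mul
      · exact Real.continuous_sin.comp (continuous_const.mul continuous_id)
      · exact (Real.continuous_rpow_const (by linarith)).comp
          (Real.continuous_cos.comp (continuous_const.mul continuous_id))
    have hGderiv : ∀ k ∈ Set.Ioo (-a) a, HasDerivAt G (G' k) k := by
      intro k hk
      have hcp := hcpos k hk
      have h0 : HasDerivAt (fun x : ℝ => s * x) s k := by
        simpa using (hasDerivAt_id k).const_mul s
      have h1 : HasDerivAt (fun x : ℝ => Real.sin (s * x)) (Real.cos (s * k) * s) k :=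
        (Real.hasDerivAt_sin (s * k)).comp k h0
      have hc : HasDerivAt (fun x : ℝ => Real.cos (s * x)) (-Real.sin (s * k) * s) k :=
        (Real.hasDerivAt_cos (s * k)).comp k h0
      have h2 : HasDerivAt (fun y : ℝ => y ^ (2 * γ - 1))
          ((2 * γ - 1) * Real.cos (s * k) ^ (2 * γ - 1 - 1)) (Real.cos (s * k)) :=
        Real.hasDerivAt_rpow_const (Or.inl hcp.ne')
      have h3 : HasDerivAt (fun x : ℝ => Real.cos (s * x) ^ (2 * γ - 1))
          ((2 * γ - 1) * Real.cos (s * k) ^ (2 * γ - 1 - 1) * (-Real.sin (s * k) * s)) k :=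
        by have := h2.comp k hc; exact this
      have h4 := h1.mul h3
      refine HasDerivAt.congr_deriv h4 ?_
      symm
      rw [show (2 * γ - 1 - 1 : ℝ) = 2 * γ - 2 by ring]
      have e1 : Real.cos (s * k) * Real.cos (s * k) ^ (2 * γ - 1)
          = Real.cos (s * k) ^ (2 * γ) := by
        rw [show (2 * γ : ℝ) = (2 * γ - 1) + 1 by ring, Real.rpow_add hcp, Real.rpow_one]
        ring
      have e2 : Real.cos (s * k) ^ (2 * γ - 2) * Real.cos (s * k) ^ 2
          = Real.cos (s * k) ^ (2 * γ) := by
        rw [sq, show (2 * γ : ℝ) = (2 * γ - 2) + 1 + 1 by ring, Real.rpow_add hcp,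
          Real.rpow_add hcp, Real.rpow_one]
        ring
      have hpyth := Real.sin_sq_add_cos_sq (s * k)
      linear_combination (-s) * e1 + (s * (2 * γ - 1) * Real.cos (s * k) ^ (2 * γ - 2)) * hpyth
        + (-(s * (2 * γ - 1))) * e2
    have hG'int : IntervalIntegrable G' volume (-a) a :=
      (hiiA.const_mul (s * (2 * γ))).sub (hiiC.const_mul (s * (2 * γ - 1)))
    have hftc : ∫ k in (-a)..a, G' k = G a - G (-a) :=
      intervalIntegral.integral_eq_sub_of_hasDerivAt_of_le (by linarith) hGcont hGderiv hG'int
    have hGa : G a = 0 := by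
      simp only [hGdef, hsa, Real.cos_pi_div_two]
      rw [Real.zero_rpow (by linarith)]
      ring
    have hGma : G (-a) = 0 := by
      simp only [hGdef, mul_neg, hsa, Real.cos_neg, Real.cos_pi_div_two]
      rw [Real.zero_rpow (by linarith)]
      ring
    have hsplit : ∫ k in (-a)..a, G' k = s * (2 * γ) * A - s * (2 * γ - 1) * C := by
      rw [hG'def]
      rw [intervalIntegral.integral_sub (hiiA.const_mul _) (hiiC.const_mul _)]
      rw [intervalIntegral.integral_const_mul, intervalIntegral.integral_const_mul]
      rw [intervalIntegral.integral_of_le (by linarith : (-a : ℝ) ≤ a),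
        MeasureTheory.integral_Ioc_eq_integral_Ioo]
      rw [intervalIntegral.integral_of_le (by linarith : (-a : ℝ) ≤ a),
        MeasureTheory.integral_Ioc_eq_integral_Ioo]
    rw [hftc, hGa, hGma] at hsplit
    linarith
  have h5 : (2 * γ) * A = (2 * γ - 1) * C :=
    mul_left_cancel₀ hs.ne' (by linear_combination hkey)
  -- the norm integral
  have E1 : (∫ k in I, ψ k ^ 2) = A := by
    rw [hIa]
    apply setIntegral_congr_fun measurableSet_Ioo
    intro k hk
    have hcp := hcpos k hk
    show ψ k ^ 2 = Real.cos (s * k) ^ (2 * γ)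
    rw [hψ k, sq, ← Real.rpow_add hcp]
    congr 1
    ring
  -- the derivative integral
  have E2 : (∫ k in I, (deriv ψ k) ^ 2) = β * γ ^ 2 * (C - A) := by
    rw [hIa]
    have : (∫ k in Set.Ioo (-a) a, (deriv ψ k) ^ 2)
        = ∫ k in Set.Ioo (-a) a,
            β * γ ^ 2 * (Real.cos (s * k) ^ (2 * γ - 2) - Real.cos (s * k) ^ (2 * γ)) := by
      apply setIntegral_congr_fun measurableSet_Ioo
      intro k hk
      have hcp := hcpos k hk
      show deriv ψ k ^ 2 = β * γ ^ 2 * (Real.cos (s * k) ^ (2 * γ - 2) - Real.cos (s * k) ^ (2 * γ))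
      rw [(hDψ k hk).deriv]
      have f1 : (Real.cos (s * k) ^ (γ - 1)) ^ 2 = Real.cos (s * k) ^ (2 * γ - 2) := by
        rw [sq, ← Real.rpow_add hcp]
        congr 1
        ring
      have f2 : Real.cos (s * k) ^ (2 * γ - 2) * Real.cos (s * k) ^ 2
          = Real.cos (s * k) ^ (2 * γ) := by
        rw [sq, show (2 * γ : ℝ) = (2 * γ - 2) + 1 + 1 by ring, Real.rpow_add hcp,
          Real.rpow_add hcp, Real.rpow_one]
        ring
      have hpyth := Real.sin_sq_add_cos_sq (s * k)
      linear_combination (γ ^ 2 * Real.sin (s * k) ^ 2 * s ^ 2) * f1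
        + (γ ^ 2 * Real.sin (s * k) ^ 2 * Real.cos (s * k) ^ (2 * γ - 2)) * hs2
        + (β * γ ^ 2 * Real.cos (s * k) ^ (2 * γ - 2)) * hpyth
        + (-(β * γ ^ 2)) * f2
    rw [this, MeasureTheory.integral_const_mul, MeasureTheory.integral_sub hintC hintA]
  have part1 : (∫ k in I, (deriv ψ k) ^ 2)
      = (β * γ ^ 2 / (2 * γ - 1)) * ∫ k in I, ψ k ^ 2 := by
    rw [E2, E1]
    rw [div_mul_eq_mul_div, eq_div_iff h2γ.ne']
    linear_combination (-(β * γ ^ 2)) * h5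
  refine ⟨part1, ?_⟩
  -- positivity of A
  have hApos : 0 < A := by
    have h0 : 0 < ∫ k in (-a)..a, Real.cos (s * k) ^ (2 * γ) :=
      intervalIntegral.intervalIntegral_pos_of_pos_on hiiA
        (fun x hx => Real.rpow_pos_of_pos (hcpos x hx) _) (by linarith)
    rwa [intervalIntegral.integral_of_le (by linarith : (-a : ℝ) ≤ a),
      MeasureTheory.integral_Ioc_eq_integral_Ioo] at h0
  have hκA : κ = A := hκ.trans E1
  have hκpos : 0 < κ := hκA ▸ hApos
  have hψnfun : ψn = fun k => κ ^ (-(1 / 2) : ℝ) * ψ k := funext hψn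
  have hκsq : (κ ^ (-(1 / 2) : ℝ)) ^ 2 = κ⁻¹ := by
    rw [← Real.rpow_natCast (κ ^ (-(1 / 2) : ℝ)) 2, ← Real.rpow_mul hκpos.le]
    norm_num [Real.rpow_neg_one]
  have E3 : (∫ k in I, (deriv ψn k) ^ 2) = κ⁻¹ * ∫ k in I, (deriv ψ k) ^ 2 := by
    rw [hIa]
    have : (∫ k in Set.Ioo (-a) a, (deriv ψn k) ^ 2)
        = ∫ k in Set.Ioo (-a) a, κ⁻¹ * (deriv ψ k) ^ 2 := by
      apply setIntegral_congr_fun measurableSet_Ioo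
      intro k hk
      show deriv ψn k ^ 2 = κ⁻¹ * deriv ψ k ^ 2
      have hd := hDψ k hk
      have hdn : HasDerivAt ψn (κ ^ (-(1 / 2) : ℝ)
          * (γ * Real.cos (s * k) ^ (γ - 1) * (-Real.sin (s * k) * s))) k := by
        rw [hψnfun]
        exact hd.const_mul _
      rw [hdn.deriv, hd.deriv, mul_pow, hκsq]
    rw [this, MeasureTheory.integral_const_mul]
  rw [E3, part1, ← hκ]
  field_simp
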